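/- Let λ = exp(2πi/7) and for k = 0,…,6 let p_k = (λᵏ, λ²ᵏ, λ⁴ᵏ) ∈ ℂ³. The seven projective points [p_0],…,[p_6] are in general position in ℙ²(ℂ): (i) for any three distinct indices k, l, m ∈ {0,…,6}, the vectors p_k, p_l, p_m are linearly independent over ℂ (no three of the points lie on a projective line), and (ii) for any six distinct indices, there is no nonzero homogeneous polynomial of degree 2 in ℂ[z₀,z₁,z₂] vanishing at all six corresponding points (no six of the points lie on a conic). -/

import Mathlib

open MvPolynomial

noncomputable def lam : ℂ := Complex.exp (2 * Real.pi * Complex.I / 7)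

/-- The point `p_k = (λᵏ, λ²ᵏ, λ⁴ᵏ) ∈ ℂ³`. -/
noncomputable def pPoint (k : ℕ) : Fin 3 → ℂ := ![lam ^ k, lam ^ (2 * k), lam ^ (4 * k)]

lemma lam_prim : IsPrimitiveRoot lam 7 := by
  have := Complex.isPrimitiveRoot_exp 7 (by norm_num)
  simpa [lam] using this

lemma lam_ne_zero : lam ≠ 0 := Complex.exp_ne_zero _
lemma lam7 : lam ^ 7 = 1 := lam_prim.pow_eq_one
lemma lam_pow_inj {k l : ℕ} (hk : k < 7) (hl : l < 7) (h : lam ^ k = lam ^ l) : k = l :=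
  lam_prim.pow_inj hk hl h

lemma minpoly_deg : (minpoly ℚ lam).natDegree = 6 := by
  rw [← Polynomial.cyclotomic_eq_minpoly_rat lam_prim (by norm_num),
    Polynomial.natDegree_cyclotomic, Nat.totient_prime (by norm_num)]
lemma lin6 : LinearIndependent ℚ (fun i : Fin 6 => lam ^ (i : ℕ)) := by
  have h := (linearIndependent_pow (K := ℚ) lam).comp
    (finCongr minpoly_deg.symm) (finCongr minpoly_deg.symm).injective
  simpa [Function.comp_def] using h
lemma sum7 : ∑ i : Fin 7, lam ^ (i : ℕ) = 0 := by
  have := lam_prim.geom_sum_eq_zero (by norm_num)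
  rwa [← Fin.sum_univ_eq_sum_range] at this


lemma key (g : Fin 7 → ℚ) (h : ∑ i : Fin 7, (g i : ℂ) * lam ^ (i : ℕ) = 0) :
    ∀ i j : Fin 7, g i = g j := by
  have h6 : ∀ i : Fin 6, g i.castSucc - g 6 = 0 := by
    refine Fintype.linearIndependent_iff.mp lin6 (fun i => g i.castSucc - g 6) ?_
    have hs7 := sum7
    rw [Fin.sum_univ_seven] at hs7 h
    rw [Fin.sum_univ_six]
    simp only [Rat.smul_def, Rat.cast_sub]
    simp only [show ((0:Fin 6).castSucc) = (0:Fin 7) from by decide,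
      show ((1:Fin 6).castSucc) = (1:Fin 7) from by decide,
      show ((2:Fin 6).castSucc) = (2:Fin 7) from by decide,
      show ((3:Fin 6).castSucc) = (3:Fin 7) from by decide,
      show ((4:Fin 6).castSucc) = (4:Fin 7) from by decide,
      show ((5:Fin 6).castSucc) = (5:Fin 7) from by decide,
      show ((0:Fin 6):ℕ) = 0 from by decide, show ((1:Fin 6):ℕ) = 1 from by decide,
      show ((2:Fin 6):ℕ) = 2 from by decide, show ((3:Fin 6):ℕ) = 3 from by decide,
      show ((4:Fin 6):ℕ) = 4 from by decide, show ((5:Fin 6):ℕ) = 5 from by decide,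
      show ((0:Fin 7):ℕ) = 0 from by decide, show ((1:Fin 7):ℕ) = 1 from by decide,
      show ((2:Fin 7):ℕ) = 2 from by decide, show ((3:Fin 7):ℕ) = 3 from by decide,
      show ((4:Fin 7):ℕ) = 4 from by decide, show ((5:Fin 7):ℕ) = 5 from by decide,
      show ((6:Fin 7):ℕ) = 6 from by decide] at h hs7 ⊢
    linear_combination h - (g 6 : ℂ) * hs7
  have hall : ∀ i : Fin 7, g i = g 6 := by
    intro i
    rcases eq_or_ne i 6 with rfl | hi
    · rfl
    · obtain ⟨j, rfl⟩ := (Fin.exists_castSucc_eq (n := 6) (i := i)).mpr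
        (by simpa [show (Fin.last 6) = (6:Fin 7) from by decide] using hi)
      have := h6 j; linarith
  intro i j; rw [hall i, hall j]

lemma exists_ne3 (A B C : Fin 7) : ∃ i : Fin 7, i ≠ A ∧ i ≠ B ∧ i ≠ C := by
  revert A B C; decide

lemma sum_ne {a b c : ℕ} (ha : a < 7) (hb : b < 7) (hc : c < 7)
    (hab : a ≠ b) (hac : a ≠ c) (hbc : b ≠ c) :
    lam ^ a + lam ^ b + lam ^ c ≠ 0 := by
  intro h
  set A : Fin 7 := ⟨a, ha⟩
  set B : Fin 7 := ⟨b, hb⟩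
  set C : Fin 7 := ⟨c, hc⟩
  have hAB : A ≠ B := fun h' => hab (congrArg Fin.val h')
  have hAC : A ≠ C := fun h' => hac (congrArg Fin.val h')
  have hBC : B ≠ C := fun h' => hbc (congrArg Fin.val h')
  set g : Fin 7 → ℚ := fun i =>
    (if i = A then 1 else 0) + (if i = B then 1 else 0) + (if i = C then 1 else 0) with hg
  have hsum : ∑ i : Fin 7, (g i : ℂ) * lam ^ (i : ℕ) = 0 := by
    have : ∀ i : Fin 7, (g i : ℂ) * lam ^ (i : ℕ) =
        (if i = A then lam ^ (i : ℕ) else 0) + (if i = B then lam ^ (i : ℕ) else 0)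
          + (if i = C then lam ^ (i : ℕ) else 0) := by
      intro i
      simp only [hg]
      split_ifs <;> push_cast <;> ring
    rw [Finset.sum_congr rfl (fun i _ => this i)]
    rw [Finset.sum_add_distrib, Finset.sum_add_distrib]
    simp only [Finset.sum_ite_eq', Finset.mem_univ, if_true]
    exact h
  have hconst := key g hsum
  obtain ⟨i, hiA, hiB, hiC⟩ : ∃ i : Fin 7, i ≠ A ∧ i ≠ B ∧ i ≠ C := exists_ne3 A B C
  have h1 : g A = 1 := by simp [hg, hAB, hAC]
  have h0 : g i = 0 := by simp [hg, hiA, hiB, hiC]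
  rw [hconst A i, h0] at h1
  norm_num at h1

lemma pow2 (j : ℕ) : lam ^ (2 * j) = (lam ^ j) ^ 2 := by rw [mul_comm, pow_mul]
lemma pow4 (j : ℕ) : lam ^ (4 * j) = (lam ^ j) ^ 4 := by rw [mul_comm, pow_mul]

lemma part1 (k l m : Fin 7) (hkl : k ≠ l) (hkm : k ≠ m) (hlm : l ≠ m) :
    LinearIndependent ℂ ![pPoint (k : ℕ), pPoint (l : ℕ), pPoint (m : ℕ)] := by
  have hvkl : (k : ℕ) ≠ (l : ℕ) := fun h => hkl (Fin.ext h)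
  have hvkm : (k : ℕ) ≠ (m : ℕ) := fun h => hkm (Fin.ext h)
  have hvlm : (l : ℕ) ≠ (m : ℕ) := fun h => hlm (Fin.ext h)
  set a := lam ^ (k : ℕ) with hA
  set b := lam ^ (l : ℕ) with hB
  set c := lam ^ (m : ℕ) with hC
  have hdet : (Matrix.of ![pPoint (k : ℕ), pPoint (l : ℕ), pPoint (m : ℕ)]).det
      = a * b * c * (b - a) * (c - a) * (c - b) * (a + b + c) := by
    rw [Matrix.det_fin_three]
    simp [pPoint, pow2, pow4]
    ring
  have hne : (Matrix.of ![pPoint (k : ℕ), pPoint (l : ℕ), pPoint (m : ℕ)]).det ≠ 0 := by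
    rw [hdet]
    have hinj : ∀ i j : Fin 7, (i : ℕ) ≠ (j : ℕ) → lam ^ (i : ℕ) ≠ lam ^ (j : ℕ) :=
      fun i j hij h => hij (lam_pow_inj i.isLt j.isLt h)
    have h0 : ∀ j : Fin 7, lam ^ (j : ℕ) ≠ 0 := fun j => pow_ne_zero _ lam_ne_zero
    refine mul_ne_zero (mul_ne_zero (mul_ne_zero (mul_ne_zero (mul_ne_zero (mul_ne_zero
      (h0 k) (h0 l)) (h0 m)) (sub_ne_zero_of_ne ?_)) (sub_ne_zero_of_ne ?_))
      (sub_ne_zero_of_ne ?_)) ?_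
    · exact (hinj l k (Ne.symm hvkl))
    · exact (hinj m k (Ne.symm hvkm))
    · exact (hinj m l (Ne.symm hvlm))
    · exact sum_ne k.isLt l.isLt m.isLt hvkl hvkm hvlm
  exact Matrix.linearIndependent_rows_iff_isUnit.mpr
    ((Matrix.isUnit_iff_isUnit_det _).mpr (isUnit_iff_ne_zero.mpr hne))


def Mvec : Fin 6 → Fin 3 → ℕ :=
  ![![0,0,2], ![2,0,0], ![1,1,0], ![0,2,0], ![1,0,1], ![0,1,1]]

noncomputable def mon (e : Fin 6) : Fin 3 →₀ ℕ := Finsupp.equivFunOnFinite.symm (Mvec e)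

lemma mon_apply (e : Fin 6) (i : Fin 3) : mon e i = Mvec e i := rfl

lemma mon_inj : Function.Injective mon := by
  intro e e' h
  have h2 : Mvec e = Mvec e' := Finsupp.equivFunOnFinite.symm.injective h
  have : ∀ e e' : Fin 6, Mvec e = Mvec e' → e = e' := by decide
  exact this e e' h2

lemma degsum (d : Fin 3 →₀ ℕ) : d.degree = d 0 + d 1 + d 2 := by
  rw [Finsupp.degree_apply,
    Finset.sum_subset (Finset.subset_univ _) (fun x _ hx => Finsupp.notMem_support_iff.mp hx),
    Fin.sum_univ_three]

lemma classify (d : Fin 3 →₀ ℕ) (hd : d.degree = 2) : ∃ e, d = mon e := by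
  have h3 : d 0 + d 1 + d 2 = 2 := by rw [← degsum]; exact hd
  have hkey : ∃ e : Fin 6, ⇑d = Mvec e := by
    have hfun : ⇑d = ![d 0, d 1, d 2] := by funext i; fin_cases i <;> rfl
    obtain ⟨x, hx⟩ : ∃ x, d 0 = x := ⟨_, rfl⟩
    obtain ⟨y, hy⟩ : ∃ y, d 1 = y := ⟨_, rfl⟩
    obtain ⟨z, hz⟩ : ∃ z, d 2 = z := ⟨_, rfl⟩
    rw [hx, hy, hz] at h3 hfun
    have hx2 : x ≤ 2 := by omega
    have hy2 : y ≤ 2 := by omega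
    have hz2 : z ≤ 2 := by omega
    interval_cases x <;> interval_cases y <;> interval_cases z <;>
      first | omega | (rw [hfun]; decide)
  obtain ⟨e, he⟩ := hkey
  exact ⟨e, Finsupp.ext fun i => (congrFun he i).trans (mon_apply e i).symm⟩

lemma pow_red (n k : ℕ) : lam ^ ((n + 7) * k) = lam ^ (n * k) := by
  rw [add_mul, pow_add, show lam ^ (7 * k) = 1 by rw [pow_mul, lam7, one_pow], mul_one]

lemma prod_eval (k : ℕ) (e : Fin 6) :
    (∏ i, pPoint k i ^ (mon e) i) = lam ^ (((e : ℕ) + 1) * k) := by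
  have h : (∏ i, pPoint k i ^ (mon e) i)
      = lam ^ ((Mvec e 0 + 2 * Mvec e 1 + 4 * Mvec e 2) * k) := by
    rw [Fin.prod_univ_three]
    simp only [pPoint, Matrix.cons_val_zero, Matrix.cons_val_one, Matrix.head_cons,
      Matrix.cons_val_two, Matrix.tail_cons, mon_apply, ← pow_mul, ← pow_add]
    congr 1; ring
  rw [h]
  fin_cases e
  · exact (show lam ^ ((1 + 7) * k) = lam ^ (1 * k) from pow_red 1 k)
  · rfl
  · rfl
  · rfl
  · rfl
  · rfl

lemma eval_q (q : MvPolynomial (Fin 3) ℂ) (hq : q.IsHomogeneous 2) (k : ℕ) :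
    eval (pPoint k) q = ∑ e : Fin 6, coeff (mon e) q * lam ^ (((e : ℕ) + 1) * k) := by
  rw [eval_eq']
  have hdeg : ∀ d ∈ q.support, d.degree = 2 := by
    intro d hd
    rw [Finsupp.degree_eq_weight_one]
    exact hq (MvPolynomial.mem_support_iff.mp hd)
  have hsub : q.support ⊆ Finset.image mon Finset.univ := by
    intro d hd
    obtain ⟨e, rfl⟩ := classify d (hdeg d hd)
    exact Finset.mem_image_of_mem mon (Finset.mem_univ e)
  rw [Finset.sum_subset hsub (fun d _ hd => by
    rw [MvPolynomial.notMem_support_iff.mp hd, zero_mul])]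
  rw [Finset.sum_image (fun x _ y _ h => mon_inj h)]
  exact Finset.sum_congr rfl fun e _ => by rw [prod_eval]

lemma part2 (s : Finset (Fin 7)) (hs : s.card = 6) (q : MvPolynomial (Fin 3) ℂ)
    (hq : q.IsHomogeneous 2) (hv : ∀ k ∈ s, eval (pPoint (k : ℕ)) q = 0) : q = 0 := by
  set σf := s.orderEmbOfFin hs with hσ
  set v : Fin 6 → ℂ := fun i => lam ^ ((σf i : Fin 7) : ℕ) with hvdef
  have hvinj : Function.Injective v := by
    intro i j h
    exact σf.injective (Fin.ext (lam_pow_inj (σf i).isLt (σf j).isLt h))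
  set A : Matrix (Fin 6) (Fin 6) ℂ := Matrix.of fun i e => v i * Matrix.vandermonde v i e
    with hA
  have hAdet : A.det ≠ 0 := by
    rw [hA, Matrix.det_mul_column v (Matrix.vandermonde v)]
    exact mul_ne_zero (Finset.prod_ne_zero_iff.mpr fun i _ => pow_ne_zero _ lam_ne_zero)
      (Matrix.det_vandermonde_ne_zero_iff.mpr hvinj)
  have hc : (fun e => coeff (mon e) q) = 0 := by
    apply Matrix.eq_zero_of_mulVec_eq_zero hAdet
    funext i
    have h0 := hv (σf i) (Finset.orderEmbOfFin_mem s hs i)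
    rw [eval_q q hq] at h0
    show ∑ e : Fin 6, A i e * coeff (mon e) q = 0
    rw [← h0]
    refine Finset.sum_congr rfl fun e _ => ?_
    have hAe : A i e = lam ^ (((e : ℕ) + 1) * ((σf i : Fin 7) : ℕ)) := by
      rw [hA]
      show v i * v i ^ (e : ℕ) = _
      rw [hvdef]
      rw [← pow_succ']
      rw [← pow_mul]
      congr 1
      ring
    rw [hAe]
    ring
  have hcoeff : ∀ e : Fin 6, coeff (mon e) q = 0 := fun e => congrFun hc e
  ext d
  rw [coeff_zero]
  by_contra hne
  have hdeg : d.degree = 2 := by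
    rw [Finsupp.degree_eq_weight_one]; exact hq hne
  obtain ⟨e, rfl⟩ := classify d hdeg
  exact hne (hcoeff e)


/-- The seven points `[p_0], …, [p_6]` are in general position in ℙ²(ℂ):
(i) no three of them lie on a projective line (any three of the vectors are linearly
independent over ℂ), and (ii) no six of them lie on a conic (no nonzero homogeneous
polynomial of degree 2 vanishes at six of the points). -/
theorem seven_points_in_general_position :
    (∀ k l m : Fin 7, k ≠ l → k ≠ m → l ≠ m →
      LinearIndependent ℂ ![pPoint (k : ℕ), pPoint (l : ℕ), pPoint (m : ℕ)]) ∧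
    (∀ s : Finset (Fin 7), s.card = 6 → ∀ q : MvPolynomial (Fin 3) ℂ,
      q.IsHomogeneous 2 → (∀ k ∈ s, eval (pPoint (k : ℕ)) q = 0) → q = 0) := by
  exact ⟨fun k l m hkl hkm hlm => part1 k l m hkl hkm hlm,
    fun s hs q hq hv => part2 s hs q hq hv⟩
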